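/- Let ℋ be a complex Hilbert space and let ξ, η : H → ℋ be bounded continuous maps such that u(t⁻¹s) = ⟪ξ(s), η(t)⟫ for all s, t ∈ H, where u : H → ℂ. For g ∈ G define ξ̂_g, η̂_g : X → ℋ by ξ̂_g(x) = √(χ(g⁻¹, x)) • ξ(α(g⁻¹, x)⁻¹) and η̂_g(x) = √(χ(g⁻¹, x)) • η(α(g⁻¹, x)⁻¹). Then: (1) for every g ∈ G, ∫_X ‖ξ̂_g(x)‖² dμ(x) ≤ (sup_{h ∈ H} ‖ξ(h)‖)² and ∫_X ‖η̂_g(x)‖² dμ(x) ≤ (sup_{h ∈ H} ‖η(h)‖)²; (2) for all g, h ∈ G, û(h⁻¹g) = ∫_X ⟪ξ̂_g(x), η̂_h(x)⟫ dμ(x). -/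

import Mathlib

open MeasureTheory Filter Set
open scoped ENNReal

/-- Computations in the proof of Lemma 2.1(a): given witnesses `ξ, η : H → ℋ` for a
Herz–Schur multiplier `u` on `H` (so `u(t⁻¹s) = ⟪ξ(s), η(t)⟫`), the vectors
`ξ̂_g(x) = √(χ(g⁻¹, x)) • ξ(α(g⁻¹, x)⁻¹)` and `η̂_g(x) = √(χ(g⁻¹, x)) • η(α(g⁻¹, x)⁻¹)`
satisfy `∫ ‖ξ̂_g‖² dμ ≤ (sup ‖ξ‖)²`, `∫ ‖η̂_g‖² dμ ≤ (sup ‖η‖)²`, and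
`û(h⁻¹g) = ∫ ⟪ξ̂_g(x), η̂_h(x)⟫ dμ(x)`. -/
theorem herz_schur_witness_transfer
    {G H X : Type*}
    [Group G] [TopologicalSpace G] [IsTopologicalGroup G] [LocallyCompactSpace G]
    [SecondCountableTopology G] [T2Space G] [MeasurableSpace G] [BorelSpace G]
    [Group H] [TopologicalSpace H] [IsTopologicalGroup H] [LocallyCompactSpace H]
    [SecondCountableTopology H] [T2Space H] [MeasurableSpace H] [BorelSpace H]
    [MeasurableSpace X] [StandardBorelSpace X]
    [MulAction G X] (hact : Measurable fun p : G × X => p.1 • p.2)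
    (μ : Measure X) [IsProbabilityMeasure μ]
    -- the Radon–Nikodym cocycle of the action
    (χ : G → X → ℝ)
    (hχmeas : Measurable fun p : G × X => χ p.1 p.2)
    (hχnonneg : ∀ g x, 0 ≤ χ g x)
    (hχRN : ∀ g : G, ∀ f : X → ℝ≥0∞, Measurable f →
      ∫⁻ x, f (g • x) * ENNReal.ofReal (χ g x) ∂μ = ∫⁻ x, f x ∂μ)
    (hχcoc : ∀ g h : G, ∀ᵐ x ∂μ, χ (g * h) x = χ g (h • x) * χ h x)
    -- the Borel cocycle
    (α : G → X → H)
    (hαmeas : Measurable fun p : G × X => α p.1 p.2)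
    (hαcoc : ∀ g h : G, ∀ᵐ x ∂μ, α (g * h) x = α g (h • x) * α h x)
    -- the Hilbert space ℋ and the bounded continuous witnesses ξ, η for u
    {E : Type*} [NormedAddCommGroup E] [InnerProductSpace ℂ E] [CompleteSpace E]
    (ξ η : H → E) (hξcont : Continuous ξ) (hηcont : Continuous η)
    (Cξ Cη : ℝ) (hξbdd : ∀ h, ‖ξ h‖ ≤ Cξ) (hηbdd : ∀ h, ‖η h‖ ≤ Cη)
    (u : H → ℂ) (hu : ∀ s t : H, u (t⁻¹ * s) = inner ℂ (ξ s) (η t)) :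
    -- (1) the `L²`-norm bounds on `ξ̂_g` and `η̂_g`
    (∀ g : G,
      ∫⁻ x, ENNReal.ofReal (‖Real.sqrt (χ g⁻¹ x) • ξ ((α g⁻¹ x)⁻¹)‖ ^ 2) ∂μ ≤
        ENNReal.ofReal ((⨆ h : H, ‖ξ h‖) ^ 2) ∧
      ∫⁻ x, ENNReal.ofReal (‖Real.sqrt (χ g⁻¹ x) • η ((α g⁻¹ x)⁻¹)‖ ^ 2) ∂μ ≤
        ENNReal.ofReal ((⨆ h : H, ‖η h‖) ^ 2)) ∧
    -- (2) `û(h⁻¹g) = ∫ ⟪ξ̂_g(x), η̂_h(x)⟫ dμ(x)`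
    (∀ g h : G,
      ∫ x, u (α (h⁻¹ * g) x) * (Real.sqrt (χ (h⁻¹ * g) x) : ℂ) ∂μ =
      ∫ x, (inner ℂ (Real.sqrt (χ g⁻¹ x) • ξ ((α g⁻¹ x)⁻¹))
        (Real.sqrt (χ h⁻¹ x) • η ((α h⁻¹ x)⁻¹)) : ℂ) ∂μ) := by
  -- slice measurability
  have hχm : ∀ g : G, Measurable fun x => χ g x :=
    fun g => hχmeas.comp (measurable_const.prodMk measurable_id)
  have hαm : ∀ g : G, Measurable fun x => α g x :=
    fun g => hαmeas.comp (measurable_const.prodMk measurable_id)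
  have hTm : ∀ g : G, Measurable fun x : X => g • x :=
    fun g => hact.comp (measurable_const.prodMk measurable_id)
  have hmass : ∀ g : G, ∫⁻ x, ENNReal.ofReal (χ g x) ∂μ = 1 := by
    intro g
    have h1 := hχRN g (fun _ => 1) measurable_const
    simpa using h1
  constructor
  · -- Part (1)
    intro g
    have key : ∀ (ζ : H → E) (C : ℝ), (∀ h, ‖ζ h‖ ≤ C) →
        ∫⁻ x, ENNReal.ofReal (‖Real.sqrt (χ g⁻¹ x) • ζ ((α g⁻¹ x)⁻¹)‖ ^ 2) ∂μ ≤
          ENNReal.ofReal ((⨆ h : H, ‖ζ h‖) ^ 2) := by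
      intro ζ C hC
      set S := ⨆ h : H, ‖ζ h‖ with hS
      have hbdd : BddAbove (Set.range fun h => ‖ζ h‖) :=
        ⟨C, by rintro _ ⟨h, rfl⟩; exact hC h⟩
      have hle : ∀ h : H, ‖ζ h‖ ≤ S := fun h => le_ciSup hbdd h
      have hpt : ∀ x, ENNReal.ofReal (‖Real.sqrt (χ g⁻¹ x) • ζ ((α g⁻¹ x)⁻¹)‖ ^ 2)
          ≤ ENNReal.ofReal (χ g⁻¹ x) * ENNReal.ofReal (S ^ 2) := by
        intro x
        have h1 : ‖Real.sqrt (χ g⁻¹ x) • ζ ((α g⁻¹ x)⁻¹)‖ ^ 2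
            = χ g⁻¹ x * ‖ζ ((α g⁻¹ x)⁻¹)‖ ^ 2 := by
          rw [norm_smul, mul_pow, Real.norm_eq_abs, sq_abs, Real.sq_sqrt (hχnonneg _ _)]
        rw [h1, ← ENNReal.ofReal_mul (hχnonneg _ _)]
        exact ENNReal.ofReal_le_ofReal
          (mul_le_mul_of_nonneg_left
            (pow_le_pow_left₀ (norm_nonneg _) (hle _) 2) (hχnonneg _ _))
      calc ∫⁻ x, ENNReal.ofReal (‖Real.sqrt (χ g⁻¹ x) • ζ ((α g⁻¹ x)⁻¹)‖ ^ 2) ∂μ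
          ≤ ∫⁻ x, ENNReal.ofReal (χ g⁻¹ x) * ENNReal.ofReal (S ^ 2) ∂μ :=
            lintegral_mono hpt
        _ = (∫⁻ x, ENNReal.ofReal (χ g⁻¹ x) ∂μ) * ENNReal.ofReal (S ^ 2) :=
            lintegral_mul_const _ ((hχm g⁻¹).ennreal_ofReal)
        _ = ENNReal.ofReal (S ^ 2) := by rw [hmass g⁻¹, one_mul]
    exact ⟨key ξ Cξ hξbdd, key η Cη hηbdd⟩
  · -- Part (2)
    intro g h
    -- u is continuous
    have hu1 : ∀ s, u s = inner ℂ (ξ s) (η 1) := fun s => by simpa using hu s 1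
    have hucont : Continuous u := by
      have h1 : Continuous fun s => (inner ℂ (ξ s) (η 1) : ℂ) :=
        Continuous.inner hξcont continuous_const
      simpa [← hu1] using h1
    -- the pushforward identity
    have hmap : ∀ g : G,
        Measure.map (fun x => g • x)
          (μ.withDensity fun x => ((χ g x).toNNReal : ℝ≥0∞)) = μ := by
      intro g
      ext s hs
      rw [Measure.map_apply (hTm g) hs, withDensity_apply _ ((hTm g) hs)]
      have h3 : ∀ x : X, ((fun x : X => g • x) ⁻¹' s).indicator
            (fun x => ((χ g x).toNNReal : ℝ≥0∞)) x
          = s.indicator (1 : X → ℝ≥0∞) (g • x) * ENNReal.ofReal (χ g x) := by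
        intro x
        by_cases hx : g • x ∈ s <;>
          simp [Set.indicator_apply, hx, ENNReal.ofReal]
      calc ∫⁻ x in (fun x : X => g • x) ⁻¹' s, ((χ g x).toNNReal : ℝ≥0∞) ∂μ
          = ∫⁻ x, s.indicator (1 : X → ℝ≥0∞) (g • x) * ENNReal.ofReal (χ g x) ∂μ := by
            rw [← lintegral_indicator ((hTm g) hs)]
            exact lintegral_congr h3
        _ = ∫⁻ x, s.indicator (1 : X → ℝ≥0∞) x ∂μ :=
            hχRN g _ (measurable_one.indicator hs)
        _ = μ s := lintegral_indicator_one hs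
    -- change of variables for Bochner integrals
    have hCOV : ∀ (g : G) (f : X → ℂ), Measurable f →
        ∫ x, f x ∂μ = ∫ x, (χ g x).toNNReal • f (g • x) ∂μ := by
      intro g f hf
      have hsm : AEStronglyMeasurable f
          (Measure.map (fun x => g • x)
            (μ.withDensity fun x => ((χ g x).toNNReal : ℝ≥0∞))) := by
        rw [hmap g]; exact hf.aestronglyMeasurable
      conv_lhs => rw [← hmap g]
      rw [integral_map (hTm g).aemeasurable hsm,
        integral_withDensity_eq_integral_smul ((hχm g).real_toNNReal) _]
    set k := h⁻¹ * g with hk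
    have hfm : Measurable fun x => u (α k x) * (Real.sqrt (χ k x) : ℂ) := by
      exact ((hucont.measurable).comp (hαm k)).mul
        (Complex.measurable_ofReal.comp (Real.continuous_sqrt.measurable.comp (hχm k)))
    rw [hCOV g⁻¹ _ hfm]
    apply integral_congr_ae
    have hkg : k * g⁻¹ = h⁻¹ := by rw [hk]; group
    have hαc := hαcoc k g⁻¹
    have hχc := hχcoc k g⁻¹
    rw [hkg] at hαc hχc
    filter_upwards [hαc, hχc] with x hα hχ
    -- abbreviations
    have hαval : α k (g⁻¹ • x) = α h⁻¹ x * (α g⁻¹ x)⁻¹ := by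
      rw [hα]; group
    have hsq : Real.sqrt (χ h⁻¹ x) = Real.sqrt (χ k (g⁻¹ • x)) * Real.sqrt (χ g⁻¹ x) := by
      rw [hχ, Real.sqrt_mul (hχnonneg _ _)]
    have huval : u (α k (g⁻¹ • x)) =
        inner ℂ (ξ ((α g⁻¹ x)⁻¹)) (η ((α h⁻¹ x)⁻¹)) := by
      rw [hαval, ← hu ((α g⁻¹ x)⁻¹) ((α h⁻¹ x)⁻¹), inv_inv]
    -- compute the inner product on the right
    have hinner : (inner ℂ (Real.sqrt (χ g⁻¹ x) • ξ ((α g⁻¹ x)⁻¹))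
          (Real.sqrt (χ h⁻¹ x) • η ((α h⁻¹ x)⁻¹)) : ℂ)
        = (Real.sqrt (χ g⁻¹ x) : ℂ) * (Real.sqrt (χ h⁻¹ x) : ℂ) *
          inner ℂ (ξ ((α g⁻¹ x)⁻¹)) (η ((α h⁻¹ x)⁻¹)) := by
      rw [← algebraMap_smul ℂ (Real.sqrt (χ g⁻¹ x)) (ξ ((α g⁻¹ x)⁻¹)),
        ← algebraMap_smul ℂ (Real.sqrt (χ h⁻¹ x)) (η ((α h⁻¹ x)⁻¹)),
        Complex.coe_algebraMap, inner_smul_left, inner_smul_right, Complex.conj_ofReal]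
      ring
    rw [hinner, ← huval]
    have hnn : ((χ g⁻¹ x).toNNReal : ℝ) = χ g⁻¹ x := Real.coe_toNNReal _ (hχnonneg _ _)
    have hmul : χ g⁻¹ x = Real.sqrt (χ g⁻¹ x) * Real.sqrt (χ g⁻¹ x) :=
      (Real.mul_self_sqrt (hχnonneg _ _)).symm
    rw [NNReal.smul_def, Complex.real_smul, hnn]
    rw [hsq]
    conv_lhs => rw [hmul]
    push_cast
    ring
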